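/- Let k be a field and d ≥ 1. Let s be a minimal (d−1)-cycle over k and let c be a d-chain with ∂c = s that is minimal in the sense that no subchain c′ of c with c′ ≠ c satisfies ∂c′ = s. Let v be a vertex not contained in any set of supp(c) (hence v lies in no set of supp(s)). Then the d-chain s̃ = c − v*s is a minimal d-cycle over k. -/
import Mathlib


namespace Paper2CM

variable {V : Type*} [Fintype V] [LinearOrder V]

/-- `sign(t,T) = (−1)^{|{s ∈ T : s < t}|}`. -/
def signOf (t : V) (T : Finset V) : ℤ := (-1) ^ (T.filter (fun s => s < t)).card

/-- The simplicial boundary operator on formal chains with coefficients in an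
abelian group `A`: `∂c(S) = Σ_{t ∉ S} sign(t, S ∪ {t}) • c(S ∪ {t})`. -/
def bdry {A : Type*} [AddCommGroup A] (c : Finset V → A) : Finset V → A :=
  fun S => ∑ t ∈ Sᶜ, signOf t (insert t S) • c (insert t S)

/-- A chain of degree `n - 1`, i.e. supported on sets of cardinality `n`. -/
def IsSimpChain {A : Type*} [AddCommGroup A] (n : ℕ) (c : Finset V → A) : Prop :=
  ∀ T, c T ≠ 0 → T.card = n

/-- `c'` is a subchain of `c`: each coefficient of `c'` agrees with that of `c` or is `0`. -/
def Subchain {A : Type*} [AddCommGroup A] (c' c : Finset V → A) : Prop :=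
  ∀ T, c' T = c T ∨ c' T = 0

/-- A minimal cycle supported on sets of cardinality `n` (so of dimension `n - 1`):
a nonzero cycle whose only subchains that are cycles are `0` and itself. -/
def IsMinimalCycle {A : Type*} [AddCommGroup A] (n : ℕ) (c : Finset V → A) : Prop :=
  c ≠ 0 ∧ IsSimpChain n c ∧ bdry c = 0 ∧
    ∀ c', Subchain c' c → bdry c' = 0 → c' = 0 ∨ c' = c

/-- The simplicial complex spanned by the support of a chain. -/
def spannedComplex {A : Type*} [AddCommGroup A] (c : Finset V → A) : Set (Finset V) :=
  {S | ∃ T, c T ≠ 0 ∧ S ⊆ T}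

/-- The cone `v*c` over a chain `c` by a vertex `v` not contained in any set of
`supp(c)`: `(v*c)(T) = sign(v, T∖{v}) • c(T∖{v})` if `v ∈ T`, and `0` otherwise. -/
def coneChain {A : Type*} [AddCommGroup A] (v : V) (c : Finset V → A) : Finset V → A :=
  fun T => if v ∈ T then signOf v (T.erase v) • c (T.erase v) else 0

lemma signOf_mul_self (t : V) (T : Finset V) : signOf t T * signOf t T = 1 := by
  unfold signOf
  rw [← mul_pow]; norm_num

lemma signOf_smul_smul {A : Type*} [AddCommGroup A] (t : V) (T : Finset V) (x : A) :
    signOf t T • signOf t T • x = x := by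
  rw [smul_smul, signOf_mul_self, one_smul]

lemma signOf_smul_eq_zero {A : Type*} [AddCommGroup A]
    (t : V) (T : Finset V) (x : A) (h : signOf t T • x = 0) : x = 0 := by
  have := congrArg (fun y => signOf t T • y) h
  simpa [signOf_smul_smul] using this

lemma signOf_insert_self (t : V) (S : Finset V) : signOf t (insert t S) = signOf t S := by
  unfold signOf
  rw [Finset.filter_insert]
  simp [lt_irrefl]

lemma sign_identity (v t : V) (S : Finset V) (hv : v ∈ S) (ht : t ∉ S) :
    signOf t (insert t S) * signOf v (insert t (S.erase v)) =
      -(signOf v (S.erase v) * signOf t (insert t (S.erase v))) := by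
  have htv : t ≠ v := fun h => ht (h ▸ hv)
  rw [signOf_insert_self, signOf_insert_self]
  unfold signOf
  rcases htv.lt_or_gt with hlt | hlt
  · -- t < v
    have h1 : (S.erase v).filter (fun s => s < t) = S.filter (fun s => s < t) := by
      rw [Finset.filter_erase, Finset.erase_eq_of_notMem]
      simp only [Finset.mem_filter, not_and]
      intro _ h; exact absurd (h.trans hlt) (lt_irrefl v)
    have h2 : (insert t (S.erase v)).filter (fun s => s < v)
        = insert t ((S.erase v).filter (fun s => s < v)) := by
      rw [Finset.filter_insert, if_pos hlt]
    have h3 : t ∉ (S.erase v).filter (fun s => s < v) := by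
      simp only [Finset.mem_filter, Finset.mem_erase]
      tauto
    rw [h1, h2, Finset.card_insert_of_notMem h3, pow_succ]
    ring
  · -- v < t
    have hvf : v ∈ S.filter (fun s => s < t) := by
      simp only [Finset.mem_filter]; exact ⟨hv, hlt⟩
    have h1 : (S.filter (fun s => s < t)).card
        = ((S.erase v).filter (fun s => s < t)).card + 1 := by
      rw [Finset.filter_erase, Finset.card_erase_of_mem hvf]
      have := Finset.card_pos.mpr ⟨v, hvf⟩
      omega
    have h2 : (insert t (S.erase v)).filter (fun s => s < v)
        = (S.erase v).filter (fun s => s < v) := by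
      rw [Finset.filter_insert, if_neg (asymm hlt)]
    rw [h1, h2, pow_succ]
    ring

lemma bdry_sub {A : Type*} [AddCommGroup A] (a b : Finset V → A) :
    bdry (a - b) = bdry a - bdry b := by
  funext S
  simp [bdry, smul_sub, Finset.sum_sub_distrib]

lemma bdry_zero {A : Type*} [AddCommGroup A] : bdry (0 : Finset V → A) = 0 := by
  funext S; simp [bdry]

lemma coneChain_zero {A : Type*} [AddCommGroup A] (v : V) :
    coneChain v (0 : Finset V → A) = 0 := by
  funext T; simp [coneChain]

/-- The cone boundary formula. -/
lemma bdry_cone {A : Type*} [AddCommGroup A] (v : V) (x : Finset V → A)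
    (hx : ∀ T, x T ≠ 0 → v ∉ T) :
    bdry (coneChain v x) = x - coneChain v (bdry x) := by
  funext S
  by_cases hvS : v ∈ S
  · -- LHS: sum over t ∈ Sᶜ
    have hxS : x S = 0 := by
      by_contra h; exact hx S h hvS
    have key : ∀ t ∈ Sᶜ, signOf t (insert t S) • coneChain v x (insert t S)
        = -(signOf v (S.erase v) •
            (signOf t (insert t (S.erase v)) • x (insert t (S.erase v)))) := by
      intro t htc
      have ht : t ∉ S := Finset.mem_compl.mp htc
      have htv : t ≠ v := fun h => ht (h ▸ hvS)
      have hvins : v ∈ insert t S := Finset.mem_insert_of_mem hvS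
      have herase : (insert t S).erase v = insert t (S.erase v) :=
        Finset.erase_insert_of_ne htv
      simp only [coneChain, if_pos hvins, herase, smul_smul]
      rw [sign_identity v t S hvS ht]
      rw [neg_smul]
    rw [bdry, Finset.sum_congr rfl key]
    have hcomp : (S.erase v)ᶜ = insert v Sᶜ := Finset.compl_erase
    have hvnc : v ∉ Sᶜ := by simp [hvS]
    have : coneChain v (bdry x) S = signOf v (S.erase v) • bdry x (S.erase v) := by
      simp [coneChain, hvS]
    rw [Pi.sub_apply, this, hxS, zero_sub, bdry, hcomp, Finset.sum_insert hvnc]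
    rw [Finset.insert_erase hvS, hxS, smul_zero, zero_add, Finset.sum_neg_distrib,
      Finset.smul_sum]
  · -- v ∉ S : only the t = v term survives
    rw [bdry, Finset.sum_eq_single v]
    · have hvi : v ∈ insert v S := Finset.mem_insert_self v S
      simp only [coneChain, if_pos hvi, Finset.erase_insert hvS, signOf_insert_self,
        signOf_smul_smul]
      simp [coneChain, hvS]
    · intro t htc htv
      have ht : t ∉ S := Finset.mem_compl.mp htc
      have : v ∉ insert t S := by
        simp [Finset.mem_insert, Ne.symm htv, hvS]
      simp [coneChain, this]
    · intro h
      exact absurd (Finset.mem_compl.mpr hvS) h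

/-- **cone lemma.** Let `s` be a minimal `(d−1)`-cycle (supported on
cardinality-`d` sets) and let `c` be a `d`-chain with `∂c = s` having no proper
subchain with boundary `s`.  If `v` is a vertex lying in no set of `supp(c)`, then
`s̃ = c − v*s` is a minimal `d`-cycle. -/
theorem cone_of_minimal_cycle_is_minimal
    {V : Type*} [Fintype V] [LinearOrder V] (k : Type*) [Field k]
    (d : ℕ) (hd : 1 ≤ d) (s c : Finset V → k)
    (hs : IsMinimalCycle d s)
    (hc : IsSimpChain (d + 1) c)
    (hbc : bdry c = s)
    (hmin : ∀ c', Subchain c' c → bdry c' = s → c' = c)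
    (v : V) (hv : ∀ T, c T ≠ 0 → v ∉ T) :
    IsMinimalCycle (d + 1) (c - coneChain v s) := by
  obtain ⟨hs0, hschain, hscyc, hsmin⟩ := hs
  -- c vanishes on sets containing v
  have hcz : ∀ T, v ∈ T → c T = 0 := by
    intro T hvT; by_contra h; exact hv T h hvT
  -- s vanishes on sets containing v
  have hsz : ∀ S, s S ≠ 0 → v ∉ S := by
    intro S hS hvS
    apply hS
    rw [← hbc, bdry]
    refine Finset.sum_eq_zero fun t _ => ?_
    rw [hcz _ (Finset.mem_insert_of_mem hvS), smul_zero]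
  have hconebdry : bdry (coneChain v s) = s := by
    rw [bdry_cone v s hsz, hscyc, coneChain_zero, sub_zero]
  refine ⟨?_, ?_, ?_, ?_⟩
  · -- nonzero
    intro h0
    obtain ⟨S, hS⟩ : ∃ S, s S ≠ 0 := by
      by_contra h; push_neg at h; exact hs0 (funext h)
    have hvS : v ∉ S := hsz S hS
    have := congrFun h0 (insert v S)
    rw [Pi.sub_apply, hcz _ (Finset.mem_insert_self v S), zero_sub, Pi.zero_apply,
      neg_eq_zero] at this
    rw [coneChain, if_pos (Finset.mem_insert_self v S), Finset.erase_insert hvS] at this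
    exact hS (signOf_smul_eq_zero v S _ this)
  · -- simp chain
    intro T hT
    by_cases hcT : c T = 0
    · rw [Pi.sub_apply, hcT, zero_sub, neg_ne_zero] at hT
      rw [coneChain] at hT
      by_cases hvT : v ∈ T
      · rw [if_pos hvT] at hT
        have hsT : s (T.erase v) ≠ 0 := fun h => hT (by rw [h, smul_zero])
        have := hschain _ hsT
        rw [Finset.card_erase_of_mem hvT] at this
        have := Finset.card_pos.mpr ⟨v, hvT⟩
        omega
      · rw [if_neg hvT] at hT; exact absurd rfl hT
    · exact hc T hcT
  · -- cycle
    rw [bdry_sub, hbc, hconebdry, sub_self]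
  · -- minimality
    intro c' hsub hcyc
    classical
    set a : Finset V → k := fun T => if v ∈ T then 0 else c' T with ha
    set s' : Finset V → k := fun S => if v ∈ S then 0 else signOf v S • (-c' (insert v S))
      with hs'
    have hs'z : ∀ S, s' S ≠ 0 → v ∉ S := by
      intro S hS hvS; exact hS (by simp [hs', hvS])
    have hdecomp : c' = a - coneChain v s' := by
      funext T
      by_cases hvT : v ∈ T
      · have hvE : v ∉ T.erase v := Finset.notMem_erase v T
        have : coneChain v s' T = -c' T := by
          rw [coneChain, if_pos hvT]
          simp only [hs', if_neg hvE, Finset.insert_erase hvT, signOf_smul_smul]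
        rw [Pi.sub_apply, this, ha]
        simp [hvT]
      · simp [ha, coneChain, hvT]
    have hasub : Subchain a c := by
      intro T
      by_cases hvT : v ∈ T
      · right; simp [ha, hvT]
      · rcases hsub T with h | h
        · left
          rw [ha]
          simp only [if_neg hvT]
          rw [h, Pi.sub_apply, coneChain, if_neg hvT, sub_zero]
        · right; simp [ha, hvT, h]
    have hs'sub : Subchain s' s := by
      intro S
      by_cases hvS : v ∈ S
      · right; simp [hs', hvS]
      · have e1 : s' S = signOf v S • (-c' (insert v S)) := by simp [hs', hvS]
        rcases hsub (insert v S) with h | h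
        · left
          rw [e1, h, Pi.sub_apply, hcz _ (Finset.mem_insert_self v S),
            zero_sub, neg_neg, coneChain, if_pos (Finset.mem_insert_self v S),
            Finset.erase_insert hvS, signOf_smul_smul]
        · right; rw [e1, h]; simp
    -- boundary equation
    have hbeq : bdry a = bdry (coneChain v s') := by
      have := congrArg bdry hdecomp
      rw [bdry_sub, hcyc] at this
      exact (sub_eq_zero.mp this.symm)
    have hconeb : bdry (coneChain v s') = s' - coneChain v (bdry s') :=
      bdry_cone v s' hs'z
    -- a vanishes with v, and s' vanishes with v, so evaluate at sets containing v
    have haz : ∀ T, v ∈ T → a T = 0 := fun T h => by simp [ha, h]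
    have hbs' : bdry s' = 0 := by
      funext R
      by_cases hvR : v ∈ R
      · rw [bdry]
        refine Finset.sum_eq_zero fun t _ => ?_
        rw [show s' (insert t R) = 0 by simp [hs', Finset.mem_insert_of_mem hvR], smul_zero]
      · have h1 := congrFun hbeq (insert v R)
        have h2 : bdry a (insert v R) = 0 := by
          rw [bdry]
          refine Finset.sum_eq_zero fun t _ => ?_
          rw [haz _ (Finset.mem_insert_of_mem (Finset.mem_insert_self v R)), smul_zero]
        rw [h2, hconeb, Pi.sub_apply] at h1
        have hvi : v ∈ insert v R := Finset.mem_insert_self v R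
        rw [show s' (insert v R) = 0 by simp [hs', hvi], zero_sub,
          coneChain, if_pos hvi, Finset.erase_insert hvR] at h1
        have h3 : signOf v R • bdry s' R = 0 := by
          have := h1.symm; rwa [neg_eq_zero] at this
        exact signOf_smul_eq_zero v R _ h3
    rcases hsmin s' hs'sub hbs' with h0 | hss
    · -- s' = 0, then c' = a, bdry a = 0, c - a has bdry s
      left
      have hca : c' = a := by rw [hdecomp, h0, coneChain_zero, sub_zero]
      have hba : bdry a = 0 := by
        rw [hbeq, h0, coneChain_zero, bdry_zero]
      have hsub2 : Subchain (c - a) c := by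
        intro T
        rcases hasub T with h | h
        · right; rw [Pi.sub_apply, h, sub_self]
        · left; rw [Pi.sub_apply, h, sub_zero]
      have : c - a = c := hmin (c - a) hsub2 (by rw [bdry_sub, hba, hbc, sub_zero])
      have : a = 0 := sub_eq_self.mp this
      rw [hca, this]
    · -- s' = s
      right
      have hba : bdry a = s := by
        rw [hbeq, hconeb, hss, hscyc, coneChain_zero, sub_zero]
      have hac : a = c := hmin a hasub hba
      rw [hdecomp, hac, hss]

end Paper2CM
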